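/- In a generalized model category, every map f : X ⟶ Y between fibrant objects factors as f = q ∘ j where j : X ⟶ Pf is a weak equivalence that is a section of a trivial fibration, and q : Pf ⟶ Y is a fibration (the mapping path factorization). -/

import Mathlib

open CategoryTheory CategoryTheory.Limits CategoryTheory.Functor

universe w₁ w₂ w₃ w₄ v₁ v₂ v₃ v₄

namespace PaperStacks

/-- A functor `p : A ⥤ B` is an isofibration if every isomorphism `f : p.obj a ≅ b` in `B`
lifts to an isomorphism `e : a ≅ a'` in `A` with `p.obj a' = b` and `p.map e.hom = f.hom`
(up to the identification `p.obj a' = b`). -/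
def IsIsofibration {A : Type w₁} {B : Type w₂} [Category.{v₁} A] [Category.{v₂} B]
    (p : A ⥤ B) : Prop :=
  ∀ (a : A) (b : B) (f : p.obj a ≅ b), ∃ (a' : A) (e : a ≅ a') (h : p.obj a' = b),
    p.map e.hom = f.hom ≫ eqToHom h.symm

/-- A surjective equivalence: an equivalence of categories that is surjective on objects. -/
def IsSurjectiveEquivalence {A : Type w₁} {B : Type w₂} [Category.{v₁} A] [Category.{v₂} B]
    (p : A ⥤ B) : Prop :=
  p.IsEquivalence ∧ Function.Surjective p.obj

variable {M : Type w₁} [Category.{v₁} M]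

/-- `(L, R)` is a weak factorization system. -/
structure IsWFS (L R : MorphismProperty M) : Prop where
  llp : ∀ ⦃X Y : M⦄ (f : X ⟶ Y),
    L f ↔ ∀ ⦃Z T : M⦄ (g : Z ⟶ T), R g → HasLiftingProperty f g
  rlp : ∀ ⦃X Y : M⦄ (g : X ⟶ Y),
    R g ↔ ∀ ⦃Z T : M⦄ (f : Z ⟶ T), L f → HasLiftingProperty f g
  fact : ∀ ⦃X Y : M⦄ (f : X ⟶ Y),
    ∃ (Z : M) (i : X ⟶ Z) (p : Z ⟶ Y), L i ∧ R p ∧ i ≫ p = f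

/-- `(W, C, F)` is a generalized model category structure on `M`. -/
structure IsGMC (W C F : MorphismProperty M) : Prop where
  hasInitial : HasInitial M
  hasTerminal : HasTerminal M
  pushoutCof : ∀ ⦃X Y Z : M⦄ (f : X ⟶ Y) (g : X ⟶ Z), C f → HasPushout f g
  pullbackFib : ∀ ⦃X Y Z : M⦄ (f : X ⟶ Y) (g : Z ⟶ Y), F f → HasPullback g f
  twoOutOfThree : W.HasTwoOutOfThreeProperty
  wfs₁ : IsWFS C (F ⊓ W)
  wfs₂ : IsWFS (C ⊓ W) F

/-- An object is fibrant if its map to the terminal object is a fibration. -/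
def Fibrant (F : MorphismProperty M) (X : M) : Prop :=
  ∃ (T : M) (h : IsTerminal T), F (h.from X)

/-- An object is cofibrant if the map to it from the initial object is a cofibration. -/
def Cofibrant (C : MorphismProperty M) (A : M) : Prop :=
  ∃ (I : M) (h : IsInitial I), C (h.to A)


/-- Lifting properties are stable under pullback: if `fst, snd, f, g` is a pullback square
and `i` has the left lifting property against `g`, then `i` has it against `fst`. -/
lemma hasLiftingProperty_of_isPullback' {M : Type w₁} [Category.{v₁} M]
    {P X' Z Y' A B : M} {fst : P ⟶ X'} {snd : P ⟶ Z} {f : X' ⟶ Y'} {g : Z ⟶ Y'}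
    (hpb : IsPullback fst snd f g) (i : A ⟶ B)
    (h : HasLiftingProperty i g) : HasLiftingProperty i fst := by
  constructor
  intro u v sq
  have sq' : CommSq (u ≫ snd) i g (v ≫ f) :=
    ⟨by rw [Category.assoc, ← hpb.w, ← Category.assoc, sq.w, Category.assoc]⟩
  exact CommSq.HasLift.mk'
    { l := hpb.lift v sq'.lift (by rw [sq'.fac_right])
      fac_left := hpb.hom_ext
        (by rw [Category.assoc, hpb.lift_fst, ← sq.w])
        (by rw [Category.assoc, hpb.lift_snd, sq'.fac_left])
      fac_right := hpb.lift_fst _ _ _ }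

/-- In a generalized model category, every map between fibrant objects
factors as a weak equivalence that is a section of a trivial fibration, followed by a
fibration (the mapping path factorization). -/
theorem mapping_path_factorization
    {W C F : MorphismProperty M} (hM : IsGMC W C F)
    {X Y : M} (f : X ⟶ Y) (hX : Fibrant F X) (hY : Fibrant F Y) :
    ∃ (Pf : M) (j : X ⟶ Pf) (q : Pf ⟶ Y),
      f = j ≫ q ∧ W j ∧
      (∃ r : Pf ⟶ X, j ≫ r = 𝟙 X ∧ F r ∧ W r) ∧
      F q := by
  obtain ⟨TX, hTX, hFX⟩ := hX
  obtain ⟨TY, hTY, hFY⟩ := hY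
  -- Y × Y as pullback over the terminal object
  have : HasPullback (hTY.from Y) (hTY.from Y) := hM.pullbackFib _ _ hFY
  let YY := pullback (hTY.from Y) (hTY.from Y)
  let pi1 : YY ⟶ Y := pullback.fst _ _
  let pi2 : YY ⟶ Y := pullback.snd _ _
  let diag : Y ⟶ YY := pullback.lift (𝟙 Y) (𝟙 Y) rfl
  -- factor the diagonal
  obtain ⟨PathY, s, p, hs, hp, hsp⟩ := hM.wfs₂.fact diag
  let p0 : PathY ⟶ Y := p ≫ pi1
  let p1 : PathY ⟶ Y := p ≫ pi2
  have hsp0 : s ≫ p0 = 𝟙 Y := by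
    simp only [p0, ← Category.assoc, hsp]; simp [diag, pi1]
    exact pullback.lift_fst _ _ _
  have hsp1 : s ≫ p1 = 𝟙 Y := by
    simp only [p1, ← Category.assoc, hsp]; simp [diag, pi2]
    exact pullback.lift_snd _ _ _
  -- identities are weak equivalences
  have hWid : ∀ (Z : M), W (𝟙 Z) := fun Z =>
    (((hM.wfs₁.rlp (𝟙 Z)).mpr (fun _ _ g _ => inferInstance))).2
  -- pi1 is a fibration
  have hFpi1 : F pi1 := (hM.wfs₂.rlp pi1).mpr (fun _ _ i hi =>
    hasLiftingProperty_of_isPullback' (IsPullback.of_hasPullback _ _) i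
      ((hM.wfs₂.rlp _).mp hFY i hi))
  -- p0 is a fibration
  have hFp0 : F p0 := (hM.wfs₂.rlp p0).mpr (fun _ _ i hi => by
    have := (hM.wfs₂.rlp p).mp hp i hi
    have := (hM.wfs₂.rlp pi1).mp hFpi1 i hi
    infer_instance)
  -- p0 is a weak equivalence
  have hWp0 : W p0 := hM.twoOutOfThree.of_precomp s p0 hs.2 (by rw [hsp0]; exact hWid Y)
  -- the mapping path object
  have : HasPullback f p0 := hM.pullbackFib p0 f hFp0
  let Pf := pullback f p0
  let r : Pf ⟶ X := pullback.fst f p0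
  let snd' : Pf ⟶ PathY := pullback.snd f p0
  have hcond : r ≫ f = snd' ≫ p0 := pullback.condition
  let j : X ⟶ Pf := pullback.lift (𝟙 X) (f ≫ s)
    (by rw [Category.id_comp, Category.assoc, hsp0, Category.comp_id])
  let q : Pf ⟶ Y := snd' ≫ p1
  have hjr : j ≫ r = 𝟙 X := pullback.lift_fst _ _ _
  have hjsnd : j ≫ snd' = f ≫ s := pullback.lift_snd _ _ _
  -- r is a trivial fibration (pullback of the trivial fibration p0)
  have hpbPf : IsPullback r snd' f p0 := IsPullback.of_hasPullback f p0
  have hFr : F r := (hM.wfs₂.rlp r).mpr (fun _ _ i hi =>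
    hasLiftingProperty_of_isPullback' hpbPf i ((hM.wfs₂.rlp _).mp hFp0 i hi))
  have hWr : W r := ((hM.wfs₁.rlp r).mpr (fun _ _ i hi =>
    hasLiftingProperty_of_isPullback' hpbPf i
      ((hM.wfs₁.rlp _).mp ⟨hFp0, hWp0⟩ i hi))).2
  have hWj : W j := hM.twoOutOfThree.of_postcomp j r hWr (by rw [hjr]; exact hWid X)
  -- q is a fibration: direct lifting argument
  have hFq : F q := by
    rw [hM.wfs₂.rlp]
    intro A B i hi
    constructor
    intro u v sq
    -- lift against X → TX to get the X-component
    have hliftX : HasLiftingProperty i (hTX.from X) := (hM.wfs₂.rlp _).mp hFX i hi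
    have sqX : CommSq (u ≫ r) i (hTX.from X) (hTX.from B) := ⟨hTX.hom_ext _ _⟩
    let beta : B ⟶ X := sqX.lift
    have hbeta : i ≫ beta = u ≫ r := sqX.fac_left
    -- lift against p to get the PathY-component
    let w : B ⟶ YY := pullback.lift (beta ≫ f) v (hTY.hom_ext _ _)
    have hliftp : HasLiftingProperty i p := (hM.wfs₂.rlp _).mp hp i hi
    have hw1 : w ≫ pi1 = beta ≫ f := pullback.lift_fst _ _ _
    have hw2 : w ≫ pi2 = v := pullback.lift_snd _ _ _
    have sqP : CommSq (u ≫ snd') i p w := by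
      constructor
      apply pullback.hom_ext
      · simp only [Category.assoc]
        rw [hw1, ← Category.assoc i, hbeta, Category.assoc, hcond]
      · simp only [Category.assoc]
        rw [hw2, ← sq.w]
    let ell : B ⟶ PathY := sqP.lift
    have hell1 : i ≫ ell = u ≫ snd' := sqP.fac_left
    have hell2 : ell ≫ p = w := sqP.fac_right
    have hellp0 : ell ≫ p0 = beta ≫ f := by
      show ell ≫ p ≫ pi1 = beta ≫ f
      rw [← Category.assoc, hell2, hw1]
    exact CommSq.HasLift.mk'
      { l := pullback.lift beta ell hellp0.symm
        fac_left := by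
          apply pullback.hom_ext
          · rw [Category.assoc]
            show i ≫ (pullback.lift beta ell hellp0.symm) ≫ r = u ≫ r
            rw [pullback.lift_fst, hbeta]
          · rw [Category.assoc]
            show i ≫ (pullback.lift beta ell hellp0.symm) ≫ snd' = u ≫ snd'
            rw [pullback.lift_snd, hell1]
        fac_right := by
          show (pullback.lift beta ell hellp0.symm) ≫ snd' ≫ p1 = v
          rw [← Category.assoc, pullback.lift_snd]
          show ell ≫ p ≫ pi2 = v
          rw [← Category.assoc, hell2, hw2] }
  refine ⟨Pf, j, q, ?_, hWj, ⟨r, hjr, hFr, hWr⟩, hFq⟩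
  have hjq : j ≫ q = (j ≫ snd') ≫ p1 := by rw [Category.assoc]
  rw [hjq, hjsnd, Category.assoc, hsp1, Category.comp_id]

end PaperStacks
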